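/- Let Γ be the finite simplicial graph with vertex set {b, a₁, a₂, a₃, a₄} whose edges are a₁a₂, a₂a₃, a₃a₄, and ba_i for i = 1, 2, 3, 4. Let p : A_Γ → ℤ be the group homomorphism mapping each a_i to 1 and b to 0, and let N = ker p. Then the distortion of N in A_Γ is quadratic, i.e. Dist_{A_Γ}^N ∼ n². (In particular, the divergence of A_Γ is linear while the distortion of the normal subgroup N is quadratic, so group divergence and normal subgroup distortion are not equivalent in general.) -/

import Mathlib

/-- The word length of `g` with respect to a set `S` of letters. -/
noncomputable def wordLength {G : Type*} [Group G] (S : Set G) (g : G) : ℕ :=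
  sInf {n | ∃ l : List G, l.length = n ∧ (∀ x ∈ l, x ∈ S ∨ x⁻¹ ∈ S) ∧ l.prod = g}

/-- The distortion function: `Dist(r) = max { |h|_T : h ∈ H, |h|_S ≤ r }`. -/
noncomputable def distortion {G : Type*} [Group G] (S T : Set G) (H : Subgroup G)
    (r : ℕ) : ℕ :=
  sSup {n | ∃ h ∈ H, wordLength S h ≤ r ∧ wordLength T h = n}

/-- `f ⪯ g`. -/
def Dominated (f g : ℕ → ℕ) : Prop :=
  ∃ A B C D : ℕ, 0 < A ∧ 0 < B ∧ 0 < C ∧ ∀ x : ℕ, D < x → f x ≤ A * g (B * x) + C * x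

/-- `f ∼ g`. -/
def FEquiv (f g : ℕ → ℕ) : Prop := Dominated f g ∧ Dominated g f

/-- The defining relators of the right-angled Artin group of a graph `Γ`. -/
def raagRels {V : Type*} (Γ : SimpleGraph V) : Set (FreeGroup V) :=
  {r | ∃ u v : V, Γ.Adj u v ∧
    r = FreeGroup.of u * FreeGroup.of v * (FreeGroup.of u)⁻¹ * (FreeGroup.of v)⁻¹}

/-- The right-angled Artin group of a graph `Γ`. -/
abbrev RAAG {V : Type*} (Γ : SimpleGraph V) : Type _ := PresentedGroup (raagRels Γ)

/-- The standard generator of `RAAG Γ` associated to a vertex. -/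
def raagGen {V : Type*} (Γ : SimpleGraph V) (v : V) : RAAG Γ := PresentedGroup.of v

/-- The graph with vertices `b = 0`, `a₁ = 1`, …, `a₄ = 4` and edges
`a₁a₂, a₂a₃, a₃a₄` and `b aᵢ` for `i = 1, 2, 3, 4`. -/
def Γ7 : SimpleGraph (Fin 5) :=
  SimpleGraph.fromRel (fun i j => i = 0 ∨ (1 ≤ i.val ∧ i.val + 1 = j.val))


namespace Aux7

lemma raag_commute {V : Type*} {Γ : SimpleGraph V} {u v : V} (h : Γ.Adj u v) :
    Commute (raagGen Γ u) (raagGen Γ v) := by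
  rw [← commutatorElement_eq_one_iff_commute]
  exact (QuotientGroup.eq_one_iff _).2 (Subgroup.subset_normalClosure ⟨u, v, h, rfl⟩)

variable {G : Type*} [Group G]

variable {G : Type*} [Group G]

def IsWord (S : Set G) (l : List G) : Prop := ∀ x ∈ l, x ∈ S ∨ x⁻¹ ∈ S

lemma wordLength_le {S : Set G} {g : G} {l : List G} (hl : IsWord S l) (hp : l.prod = g) :
    wordLength S g ≤ l.length := Nat.sInf_le ⟨l, rfl, hl, hp⟩

lemma wordLength_one (S : Set G) : wordLength S (1 : G) = 0 :=
  Nat.le_zero.1 (wordLength_le (l := []) (fun x hx => absurd hx (List.not_mem_nil)) rfl)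

lemma exists_word {S : Set G} {g : G} (hne : ∃ l : List G, IsWord S l ∧ l.prod = g) :
    ∃ l : List G, IsWord S l ∧ l.prod = g ∧ l.length = wordLength S g := by
  obtain ⟨l0, hl0, hp0⟩ := hne
  have hne' : {n | ∃ l : List G, l.length = n ∧ (∀ x ∈ l, x ∈ S ∨ x⁻¹ ∈ S) ∧ l.prod = g}.Nonempty :=
    ⟨l0.length, l0, rfl, hl0, hp0⟩
  obtain ⟨l, hlen, hw, hp⟩ := Nat.sInf_mem hne'
  exact ⟨l, hw, hp, hlen⟩

lemma inv_word {S : Set G} {l : List G} (hl : IsWord S l) :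
    IsWord S (l.reverse.map (fun x => x⁻¹)) ∧ (l.reverse.map (fun x => x⁻¹)).prod = l.prod⁻¹ := by
  constructor
  · intro x hx
    simp only [List.mem_map, List.mem_reverse] at hx
    obtain ⟨y, hy, rfl⟩ := hx
    rcases hl y hy with h | h
    · exact Or.inr (by simpa using h)
    · exact Or.inl h
  · rw [List.map_reverse]; exact (List.prod_inv_reverse l).symm

lemma word_mem_closure {S : Set G} {l : List G} (hl : IsWord S l) :
    l.prod ∈ Subgroup.closure S := by
  induction l with
  | nil => simpa using one_mem _
  | cons a t ih =>
    rw [List.prod_cons]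
    refine mul_mem ?_ (ih (fun x hx => hl x (List.mem_cons_of_mem _ hx)))
    rcases hl a (List.mem_cons_self) with h | h
    · exact Subgroup.subset_closure h
    · exact (Subgroup.inv_mem_iff _).1 (Subgroup.subset_closure h)

lemma exists_word_of_mem_closure {S : Set G} {g : G} (hg : g ∈ Subgroup.closure S) :
    ∃ l : List G, IsWord S l ∧ l.prod = g := by
  have h2 : g ∈ Submonoid.closure (S ∪ S⁻¹) := by
    rw [← Subgroup.closure_toSubmonoid] at *
    exact hg
  obtain ⟨l, hl, hp⟩ := Submonoid.exists_list_of_mem_closure h2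
  refine ⟨l, fun x hx => ?_, hp⟩
  rcases hl x hx with h | h
  · exact Or.inl h
  · exact Or.inr (Set.mem_inv.1 h)


lemma word_subst {U W : Set G} {K : ℕ}
    (hU : ∀ u : G, (u ∈ U ∨ u⁻¹ ∈ U) → ∃ m : List G, IsWord W m ∧ m.prod = u ∧ m.length ≤ K) :
    ∀ l : List G, IsWord U l →
      ∃ m : List G, IsWord W m ∧ m.prod = l.prod ∧ m.length ≤ K * l.length := by
  intro l
  induction l with
  | nil => exact fun _ => ⟨[], fun x hx => absurd hx (List.not_mem_nil), by simp, by simp⟩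
  | cons a t ih =>
    intro hl
    obtain ⟨m1, hw1, hp1, hlen1⟩ := hU a (hl a (List.mem_cons_self))
    obtain ⟨m2, hw2, hp2, hlen2⟩ := ih (fun x hx => hl x (List.mem_cons_of_mem _ hx))
    refine ⟨m1 ++ m2, ?_, by simp [hp1, hp2], ?_⟩
    · intro x hx; rcases List.mem_append.1 hx with h | h
      exacts [hw1 x h, hw2 x h]
    · simp only [List.length_append, List.length_cons, Nat.mul_succ]
      omega

lemma wordLength_le_mul {U W : Set G} {K : ℕ}
    (hU : ∀ u : G, (u ∈ U ∨ u⁻¹ ∈ U) → ∃ m : List G, IsWord W m ∧ m.prod = u ∧ m.length ≤ K)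
    {g : G} (hg : ∃ l : List G, IsWord U l ∧ l.prod = g) :
    wordLength W g ≤ K * wordLength U g := by
  obtain ⟨l, hw, hp, hlen⟩ := exists_word hg
  obtain ⟨m, hmw, hmp, hmlen⟩ := word_subst hU l hw
  calc wordLength W g ≤ m.length := wordLength_le hmw (hmp.trans hp)
    _ ≤ K * l.length := hmlen
    _ = K * wordLength U g := by rw [hlen]

lemma distortion_le {S T : Set G} {H : Subgroup G} {r B : ℕ}
    (hb : ∀ h ∈ H, wordLength S h ≤ r → wordLength T h ≤ B) :
    distortion S T H r ≤ B := by
  apply csSup_le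
  · exact ⟨0, 1, H.one_mem, by simp [wordLength_one], wordLength_one T⟩
  · rintro n ⟨h, hH, hS, rfl⟩
    exact hb h hH hS

lemma le_distortion {S T : Set G} {H : Subgroup G} {r B : ℕ}
    (hb : ∀ h ∈ H, wordLength S h ≤ r → wordLength T h ≤ B)
    {h : G} (hH : h ∈ H) (hS : wordLength S h ≤ r) :
    wordLength T h ≤ distortion S T H r := by
  apply le_csSup
  · refine ⟨B, ?_⟩
    rintro n ⟨h', hH', hS', rfl⟩
    exact hb h' hH' hS'
  · exact ⟨h, hH, hS, rfl⟩



lemma pow_mul_inv {A B : G} (h : Commute A B) (e : ℤ) : (A * B⁻¹) ^ e = A ^ e * B ^ (-e) := by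
  rw [h.inv_right.mul_zpow, inv_zpow, zpow_neg]

lemma conj_comm {B C : G} (h : Commute B C) (e f : ℤ) : B ^ e * C * B ^ f = C * B ^ (e + f) := by
  rw [(h.zpow_left e).eq, mul_assoc, ← zpow_add]

-- identity (6)/(7) combined: ε = ±1 handled by two lemmas
lemma id6 {A B C : G} (hAB : Commute A B) (hBC : Commute B C) (e : ℤ) :
    (A * B⁻¹) ^ e * (B * C⁻¹)⁻¹ * (A * B⁻¹) ^ (-(e + 1)) = A ^ e * C * A ^ (-(e + 1)) := by
  rw [pow_mul_inv hAB, pow_mul_inv hAB, mul_inv_rev, inv_inv, neg_neg]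
  -- A^e * B^(-e) * (C * B⁻¹) * (A^(-(e+1)) * B^(e+1)) = A^e * C * A^(-(e+1))
  calc A ^ e * B ^ (-e) * (C * B⁻¹) * (A ^ (-(e + 1)) * B ^ (e + 1))
      = A ^ e * (B ^ (-e) * C * B ^ (-1 : ℤ)) * (A ^ (-(e+1)) * B ^ (e+1)) := by
        group
    _ = A ^ e * (C * B ^ (-e + -1)) * (B ^ (e+1) * A ^ (-(e+1))) := by
        rw [conj_comm hBC, (hAB.zpow_zpow (-(e+1)) (e+1)).eq]
    _ = A ^ e * C * (B ^ (-e + -1) * B ^ (e+1)) * A ^ (-(e+1)) := by group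
    _ = A ^ e * C * A ^ (-(e + 1)) := by rw [← zpow_add, show -e + -1 + (e + 1) = 0 by ring, zpow_zero, mul_one]

lemma id7 {A B C : G} (hAB : Commute A B) (hBC : Commute B C) (e : ℤ) :
    (A * B⁻¹) ^ e * (B * C⁻¹) * (A * B⁻¹) ^ (-(e - 1)) = A ^ e * C⁻¹ * A ^ (-(e - 1)) := by
  rw [pow_mul_inv hAB, pow_mul_inv hAB]
  calc A ^ e * B ^ (-e) * (B * C⁻¹) * (A ^ (-(e-1)) * B ^ (-(-(e-1))))
      = A ^ e * (B ^ (-e) * B * C⁻¹ * B ^ (-(-(e-1)))) * A ^ (-(e-1)) := by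
        rw [(hAB.zpow_zpow (-(e-1)) (-(-(e-1)))).eq]; group
    _ = A ^ e * (B ^ (-e + 1) * C⁻¹ * B ^ (-(-(e-1)))) * A ^ (-(e-1)) := by
        rw [← zpow_add_one]
    _ = A ^ e * (C⁻¹ * B ^ (-e + 1 + -(-(e-1)))) * A ^ (-(e-1)) := by
        rw [conj_comm hBC.inv_right]
    _ = A ^ e * C⁻¹ * A ^ (-(e - 1)) := by
        rw [show -e + 1 + -(-(e-1)) = 0 by ring, zpow_zero, mul_one]

lemma id0 {A s : G} (h : Commute A s) (e : ℤ) : A ^ e * s * A ^ (-e) = s := by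
  rw [(h.zpow_left e).eq, mul_assoc, ← zpow_add, add_neg_cancel, zpow_zero, mul_one]

lemma id3a (A : G) (e : ℤ) : A ^ e * A * A ^ (-(e + 1)) = 1 := by group
lemma id3b (A : G) (e : ℤ) : A ^ e * A⁻¹ * A ^ (-(e - 1)) = 1 := by group

lemma id4 {A B : G} (hAB : Commute A B) (e : ℤ) :
    A ^ e * B * A ^ (-(e + 1)) = (A * B⁻¹)⁻¹ := by
  rw [(hAB.zpow_left e).eq, mul_assoc, ← zpow_add, mul_inv_rev, inv_inv,
    show e + -(e+1) = -1 by ring, zpow_neg_one]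

lemma id5 {A B : G} (hAB : Commute A B) (e : ℤ) :
    A ^ e * B⁻¹ * A ^ (-(e - 1)) = A * B⁻¹ := by
  rw [(hAB.inv_right.zpow_left e).eq, mul_assoc, ← zpow_add,
    show e + -(e-1) = 1 by ring, zpow_one, hAB.inv_right.eq]

lemma id8 {A B C D : G} (hAB : Commute A B) (hBC : Commute B C) (hCD : Commute C D) (e : ℤ) :
    (A * B⁻¹) ^ e * ((B * C⁻¹) ^ e * (C * D⁻¹)⁻¹ * (B * C⁻¹) ^ (-(e + 1))) * (A * B⁻¹) ^ (-(e + 1))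
      = A ^ e * D * A ^ (-(e + 1)) := by
  rw [id6 hBC hCD, pow_mul_inv hAB, pow_mul_inv hAB, neg_neg]
  calc A ^ e * B ^ (-e) * (B ^ e * D * B ^ (-(e+1))) * (A ^ (-(e+1)) * B ^ (e+1))
      = A ^ e * (B ^ (-e) * B ^ e) * D * (B ^ (-(e+1)) * A ^ (-(e+1)) * B ^ (e+1)) := by group
    _ = A ^ e * D * (A ^ (-(e+1)) * (B ^ (-(e+1)) * B ^ (e+1))) := by
        rw [← zpow_add, neg_add_cancel, zpow_zero, mul_one,
          (hAB.zpow_zpow (-(e+1)) (-(e+1))).symm.eq]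
        group
    _ = A ^ e * D * A ^ (-(e + 1)) := by
        rw [← zpow_add, neg_add_cancel, zpow_zero, mul_one]

lemma id9 {A B C D : G} (hAB : Commute A B) (hBC : Commute B C) (hCD : Commute C D) (e : ℤ) :
    (A * B⁻¹) ^ e * ((B * C⁻¹) ^ e * (C * D⁻¹) * (B * C⁻¹) ^ (-(e - 1))) * (A * B⁻¹) ^ (-(e - 1))
      = A ^ e * D⁻¹ * A ^ (-(e - 1)) := by
  rw [id7 hBC hCD, pow_mul_inv hAB, pow_mul_inv hAB]
  calc A ^ e * B ^ (-e) * (B ^ e * D⁻¹ * B ^ (-(e-1))) * (A ^ (-(e-1)) * B ^ (-(-(e-1))))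
      = A ^ e * (B ^ (-e) * B ^ e) * D⁻¹ * (B ^ (-(e-1)) * A ^ (-(e-1)) * B ^ (-(-(e-1)))) := by
        group
    _ = A ^ e * D⁻¹ * (A ^ (-(e-1)) * (B ^ (-(e-1)) * B ^ (-(-(e-1))))) := by
        rw [← zpow_add, neg_add_cancel, zpow_zero, mul_one,
          (hAB.zpow_zpow (-(e-1)) (-(e-1))).symm.eq]
        group
    _ = A ^ e * D⁻¹ * A ^ (-(e - 1)) := by
        rw [← zpow_add, show -(e-1) + -(-(e-1)) = 0 by ring, zpow_zero, mul_one]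


end Aux7
namespace Aux7

lemma zpow_word {G : Type*} [Group G] {S : Set G} {u : G} (hu : u ∈ S) (e : ℤ) :
    ∃ m : List G, IsWord S m ∧ m.prod = u ^ e ∧ m.length = e.natAbs := by
  rcases le_or_gt 0 e with h | h
  · refine ⟨List.replicate e.toNat u, ?_, ?_, by simp; omega⟩
    · intro x hx; rw [List.eq_of_mem_replicate hx]; exact Or.inl hu
    · rw [List.prod_replicate, ← zpow_natCast, Int.toNat_of_nonneg h]
  · refine ⟨List.replicate (-e).toNat u⁻¹, ?_, ?_, by simp; omega⟩
    · intro x hx; rw [List.eq_of_mem_replicate hx]; exact Or.inr (by simpa using hu)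
    · rw [List.prod_replicate, inv_pow, ← zpow_natCast, Int.toNat_of_nonneg (by omega),
        ← zpow_neg, neg_neg]

lemma IsWord.append {G : Type*} [Group G] {S : Set G} {l1 l2 : List G}
    (h1 : IsWord S l1) (h2 : IsWord S l2) : IsWord S (l1 ++ l2) := by
  intro x hx; rcases List.mem_append.1 hx with h | h
  exacts [h1 x h, h2 x h]

def ga (i : Fin 5) : RAAG Γ7 := raagGen Γ7 i
def gx : RAAG Γ7 := ga 1 * (ga 2)⁻¹
def gy : RAAG Γ7 := ga 2 * (ga 3)⁻¹
def gz : RAAG Γ7 := ga 3 * (ga 4)⁻¹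
def T0 : Set (RAAG Γ7) := {ga 0, gx, gy, gz}

lemma adjs : Γ7.Adj 0 1 ∧ Γ7.Adj 0 2 ∧ Γ7.Adj 0 3 ∧ Γ7.Adj 0 4 ∧
    Γ7.Adj 1 2 ∧ Γ7.Adj 2 3 ∧ Γ7.Adj 3 4 := by
  refine ⟨?_,?_,?_,?_,?_,?_,?_⟩ <;> · simp [Γ7, SimpleGraph.fromRel_adj]; try decide

lemma comm01 : Commute (ga 0) (ga 1) := raag_commute adjs.1
lemma comm12 : Commute (ga 1) (ga 2) := raag_commute adjs.2.2.2.2.1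
lemma comm23 : Commute (ga 2) (ga 3) := raag_commute adjs.2.2.2.2.2.1
lemma comm34 : Commute (ga 3) (ga 4) := raag_commute adjs.2.2.2.2.2.2

lemma memT0_b : ga 0 ∈ T0 := by simp [T0]
lemma memT0_x : gx ∈ T0 := by simp [T0]
lemma memT0_y : gy ∈ T0 := by simp [T0]
lemma memT0_z : gz ∈ T0 := by simp [T0]

lemma mem_singleton_word {u : RAAG Γ7} (h : u ∈ T0 ∨ u⁻¹ ∈ T0) : IsWord T0 [u] := by
  intro x hx
  rcases List.mem_singleton.1 hx with rfl
  exact h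

variable {p : RAAG Γ7 →* Multiplicative ℤ}

section
variable (hp0 : p (raagGen Γ7 0) = 1)
    (hpa : ∀ i : Fin 5, i ≠ 0 → p (raagGen Γ7 i) = Multiplicative.ofAdd 1)
include hp0 hpa

lemma pval0 : (p (ga 0)).toAdd = 0 := by rw [ga, hp0]; rfl
lemma pval1 : (p (ga 1)).toAdd = 1 := by rw [ga, hpa 1 (by decide)]; rfl
lemma pval2 : (p (ga 2)).toAdd = 1 := by rw [ga, hpa 2 (by decide)]; rfl
lemma pval3 : (p (ga 3)).toAdd = 1 := by rw [ga, hpa 3 (by decide)]; rfl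
lemma pval4 : (p (ga 4)).toAdd = 1 := by rw [ga, hpa 4 (by decide)]; rfl

omit hp0 hpa in
lemma letters (s : RAAG Γ7)
    (hs : s ∈ Set.range (raagGen Γ7) ∨ s⁻¹ ∈ Set.range (raagGen Γ7)) :
    s = ga 0 ∨ s = ga 1 ∨ s = ga 2 ∨ s = ga 3 ∨ s = ga 4 ∨
    s = (ga 0)⁻¹ ∨ s = (ga 1)⁻¹ ∨ s = (ga 2)⁻¹ ∨ s = (ga 3)⁻¹ ∨ s = (ga 4)⁻¹ := by
  rcases hs with ⟨i, hi⟩ | ⟨i, hi⟩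
  · have : s = ga i := hi.symm
    subst this
    fin_cases i
    · exact Or.inl rfl
    · exact Or.inr (Or.inl rfl)
    · exact Or.inr (Or.inr (Or.inl rfl))
    · exact Or.inr (Or.inr (Or.inr (Or.inl rfl)))
    · exact Or.inr (Or.inr (Or.inr (Or.inr (Or.inl rfl))))
  · have : s = (ga i)⁻¹ := by rw [ga, hi, inv_inv]
    subst this
    fin_cases i
    · exact Or.inr (Or.inr (Or.inr (Or.inr (Or.inr (Or.inl rfl)))))
    · exact Or.inr (Or.inr (Or.inr (Or.inr (Or.inr (Or.inr (Or.inl rfl))))))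
    · exact Or.inr (Or.inr (Or.inr (Or.inr (Or.inr (Or.inr (Or.inr (Or.inl rfl)))))))
    · exact Or.inr (Or.inr (Or.inr (Or.inr (Or.inr (Or.inr (Or.inr (Or.inr (Or.inl rfl))))))))
    · exact Or.inr (Or.inr (Or.inr (Or.inr (Or.inr (Or.inr (Or.inr (Or.inr (Or.inr rfl))))))))

lemma letter_rw {s : RAAG Γ7}
    (hs : s ∈ Set.range (raagGen Γ7) ∨ s⁻¹ ∈ Set.range (raagGen Γ7)) (e : ℤ) :
    ∃ m : List (RAAG Γ7), IsWord T0 m ∧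
      m.prod = ga 1 ^ e * s * ga 1 ^ (-e - (p s).toAdd) ∧
      m.length ≤ 4 * e.natAbs + 5 ∧ (p s).toAdd.natAbs ≤ 1 := by
  have hpv : ∀ i : Fin 5, (p ((ga i)⁻¹)).toAdd = -(p (ga i)).toAdd := by
    intro j; rw [map_inv]; rfl
  rcases letters s hs with rfl | rfl | rfl | rfl | rfl | rfl | rfl | rfl | rfl | rfl
  · refine ⟨[ga 0], mem_singleton_word (Or.inl memT0_b), ?_, by simp, by simp [pval0 hp0 hpa]⟩
    rw [List.prod_cons, List.prod_nil, mul_one, pval0 hp0 hpa,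
      show -(e:ℤ) - 0 = -e by ring]
    exact (id0 comm01.symm e).symm
  · refine ⟨[], fun u hu => absurd hu (List.not_mem_nil), ?_, by simp, by simp [pval1 hp0 hpa]⟩
    rw [List.prod_nil, pval1 hp0 hpa, show -(e:ℤ) - 1 = -(e+1) by ring]
    exact (id3a (ga 1) e).symm
  · refine ⟨[gx⁻¹], mem_singleton_word (Or.inr (by simpa using memT0_x)), ?_, by simp,
      by simp [pval2 hp0 hpa]⟩
    rw [List.prod_cons, List.prod_nil, mul_one, pval2 hp0 hpa,
      show -(e:ℤ) - 1 = -(e+1) by ring, gx, ← id4 comm12 e]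
  · obtain ⟨m1, hw1, hp1, hl1⟩ := zpow_word memT0_x e
    obtain ⟨m2, hw2, hp2, hl2⟩ := zpow_word memT0_x (-(e+1))
    refine ⟨m1 ++ [gy⁻¹] ++ m2,
      (hw1.append (mem_singleton_word (Or.inr (by simpa using memT0_y)))).append hw2,
      ?_, ?_, by simp [pval3 hp0 hpa]⟩
    · rw [List.prod_append, List.prod_append, hp1, hp2, List.prod_cons, List.prod_nil, mul_one,
        pval3 hp0 hpa, show -(e:ℤ) - 1 = -(e+1) by ring, gx, gy, ← id6 comm12 comm23 e]
    · simp only [List.length_append, List.length_cons, List.length_nil, hl1, hl2]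
      omega
  · obtain ⟨m1, hw1, hp1, hl1⟩ := zpow_word memT0_x e
    obtain ⟨m2, hw2, hp2, hl2⟩ := zpow_word memT0_y e
    obtain ⟨m3, hw3, hp3, hl3⟩ := zpow_word memT0_y (-(e+1))
    obtain ⟨m4, hw4, hp4, hl4⟩ := zpow_word memT0_x (-(e+1))
    refine ⟨m1 ++ (m2 ++ [gz⁻¹] ++ m3) ++ m4,
      (hw1.append (((hw2.append (mem_singleton_word (Or.inr (by simpa using memT0_z)))).append hw3))).append hw4,
      ?_, ?_, by simp [pval4 hp0 hpa]⟩
    · rw [List.prod_append, List.prod_append, List.prod_append, List.prod_append,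
        hp1, hp2, hp3, hp4, List.prod_cons, List.prod_nil, mul_one,
        pval4 hp0 hpa, show -(e:ℤ) - 1 = -(e+1) by ring, gx, gy, gz, ← id8 comm12 comm23 comm34 e]
    · simp only [List.length_append, List.length_cons, List.length_nil, hl1, hl2, hl3, hl4]
      omega
  · refine ⟨[(ga 0)⁻¹], mem_singleton_word (Or.inr (by simpa using memT0_b)), ?_, by simp,
      by simp [hpv, pval0 hp0 hpa]⟩
    rw [List.prod_cons, List.prod_nil, mul_one, hpv, pval0 hp0 hpa,
      show -(e:ℤ) - -0 = -e by ring]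
    exact (id0 comm01.symm.inv_right e).symm
  · refine ⟨[], fun u hu => absurd hu (List.not_mem_nil), ?_, by simp,
      by simp [hpv, pval1 hp0 hpa]⟩
    rw [List.prod_nil, hpv, pval1 hp0 hpa, show -(e:ℤ) - -1 = -(e-1) by ring]
    exact (id3b (ga 1) e).symm
  · refine ⟨[gx], mem_singleton_word (Or.inl memT0_x), ?_, by simp,
      by simp [hpv, pval2 hp0 hpa]⟩
    rw [List.prod_cons, List.prod_nil, mul_one, hpv, pval2 hp0 hpa,
      show -(e:ℤ) - -1 = -(e-1) by ring, gx, ← id5 comm12 e]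
  · obtain ⟨m1, hw1, hp1, hl1⟩ := zpow_word memT0_x e
    obtain ⟨m2, hw2, hp2, hl2⟩ := zpow_word memT0_x (-(e-1))
    refine ⟨m1 ++ [gy] ++ m2,
      (hw1.append (mem_singleton_word (Or.inl memT0_y))).append hw2,
      ?_, ?_, by simp [hpv, pval3 hp0 hpa]⟩
    · rw [List.prod_append, List.prod_append, hp1, hp2, List.prod_cons, List.prod_nil, mul_one,
        hpv, pval3 hp0 hpa, show -(e:ℤ) - -1 = -(e-1) by ring, gx, gy, ← id7 comm12 comm23 e]
    · simp only [List.length_append, List.length_cons, List.length_nil, hl1, hl2]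
      omega
  · obtain ⟨m1, hw1, hp1, hl1⟩ := zpow_word memT0_x e
    obtain ⟨m2, hw2, hp2, hl2⟩ := zpow_word memT0_y e
    obtain ⟨m3, hw3, hp3, hl3⟩ := zpow_word memT0_y (-(e-1))
    obtain ⟨m4, hw4, hp4, hl4⟩ := zpow_word memT0_x (-(e-1))
    refine ⟨m1 ++ (m2 ++ [gz] ++ m3) ++ m4,
      (hw1.append (((hw2.append (mem_singleton_word (Or.inl memT0_z))).append hw3))).append hw4,
      ?_, ?_, by simp [hpv, pval4 hp0 hpa]⟩
    · rw [List.prod_append, List.prod_append, List.prod_append, List.prod_append,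
        hp1, hp2, hp3, hp4, List.prod_cons, List.prod_nil, mul_one,
        hpv, pval4 hp0 hpa, show -(e:ℤ) - -1 = -(e-1) by ring, gx, gy, gz, ← id9 comm12 comm23 comm34 e]
    · simp only [List.length_append, List.length_cons, List.length_nil, hl1, hl2, hl3, hl4]
      omega

lemma word_rw : ∀ l : List (RAAG Γ7), IsWord (Set.range (raagGen Γ7)) l → ∀ e : ℤ,
    ∃ m : List (RAAG Γ7), IsWord T0 m ∧
      m.prod = ga 1 ^ e * l.prod * ga 1 ^ (-e - (p l.prod).toAdd) ∧
      m.length ≤ l.length * (4 * e.natAbs + 4 * l.length + 5) := by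
  intro l
  induction l with
  | nil =>
    intro _ e
    refine ⟨[], fun u hu => absurd hu (List.not_mem_nil), ?_, by simp⟩
    simp only [List.prod_nil, map_one, toAdd_one]
    group
  | cons s t ih =>
    intro hl e
    obtain ⟨m1, h1w, h1p, h1len, h1d⟩ := letter_rw hp0 hpa (hl s (List.mem_cons_self)) e
    obtain ⟨m2, h2w, h2p, h2len⟩ := ih (fun u hu => hl u (List.mem_cons_of_mem s hu))
      (e + (p s).toAdd)
    refine ⟨m1 ++ m2, h1w.append h2w, ?_, ?_⟩
    · rw [List.prod_append, h1p, h2p, List.prod_cons, map_mul,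
        show (p s * p t.prod).toAdd = (p s).toAdd + (p t.prod).toAdd from rfl]
      group
    · have hB : (e + (p s).toAdd).natAbs ≤ e.natAbs + 1 := by omega
      have h3 : t.length * (4 * (e + (p s).toAdd).natAbs + 4 * t.length + 5)
          ≤ t.length * (4 * e.natAbs + 4 * t.length + 9) :=
        Nat.mul_le_mul_left _ (by omega)
      have h4 : (t.length + 1) * (4 * e.natAbs + 4 * (t.length + 1) + 5)
          = t.length * (4 * e.natAbs + 4 * t.length + 9) + (4 * e.natAbs + 4 * t.length + 9) := by
        ring
      simp only [List.length_append, List.length_cons]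
      linarith [h1len, h2len, h3]

lemma ker_word {h : RAAG Γ7} (hker : h ∈ p.ker) {l : List (RAAG Γ7)}
    (hl : IsWord (Set.range (raagGen Γ7)) l) (hprod : l.prod = h) :
    ∃ m : List (RAAG Γ7), IsWord T0 m ∧ m.prod = h ∧
      m.length ≤ l.length * (4 * l.length + 5) := by
  obtain ⟨m, hw, hp', hlen⟩ := word_rw hp0 hpa l hl 0
  refine ⟨m, hw, ?_, by simpa using hlen⟩
  rw [hp', hprod]
  have : p h = 1 := hker
  rw [this]
  show ga 1 ^ (0:ℤ) * h * ga 1 ^ (-0 - (0:ℤ)) = h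
  group

lemma T0_subset_ker : T0 ⊆ (p.ker : Set (RAAG Γ7)) := by
  have hx : p gx = 1 := by
    rw [gx, map_mul, map_inv, ga, ga, hpa 1 (by decide), hpa 2 (by decide), mul_inv_cancel]
  have hy : p gy = 1 := by
    rw [gy, map_mul, map_inv, ga, ga, hpa 2 (by decide), hpa 3 (by decide), mul_inv_cancel]
  have hz : p gz = 1 := by
    rw [gz, map_mul, map_inv, ga, ga, hpa 3 (by decide), hpa 4 (by decide), mul_inv_cancel]
  intro t ht
  rcases ht with rfl | rfl | rfl | rfl
  · exact hp0
  · exact hx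
  · exact hy
  · exact hz

lemma closure_T0 : Subgroup.closure T0 = p.ker := by
  refine le_antisymm ((Subgroup.closure_le _).2 (T0_subset_ker hp0 hpa)) ?_
  intro h hk
  have hS : h ∈ Subgroup.closure (Set.range (raagGen Γ7)) := by
    rw [show Set.range (raagGen Γ7) = Set.range (PresentedGroup.of (rels := raagRels Γ7)) from rfl,
      PresentedGroup.closure_range_of]
    trivial
  obtain ⟨l, hl, hprod⟩ := exists_word_of_mem_closure hS
  obtain ⟨m, hw, hp', _⟩ := ker_word hp0 hpa hk hl hprod
  rw [← hp']
  exact word_mem_closure hw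

lemma ker_fg : p.ker.FG := by
  rw [Subgroup.fg_iff]
  exact ⟨T0, closure_T0 hp0 hpa,
    (((Set.finite_singleton gz).insert gy).insert gx).insert (ga 0)⟩

end
end Aux7
namespace Aux7
open SemidirectProduct

abbrev F3 := FreeGroup (Fin 3)
def fx : F3 := FreeGroup.of 0
def fy : F3 := FreeGroup.of 1
def fz : F3 := FreeGroup.of 2

def σmap : Fin 3 → F3 := fun i =>
  match i with
  | 0 => (fy * fz)⁻¹ * fx * (fy * fz)
  | 1 => fz⁻¹ * fy * fz
  | 2 => fz

def τmap : Fin 3 → F3 := fun i =>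
  match i with
  | 0 => (fz * fy) * fx * (fz * fy)⁻¹
  | 1 => fz * fy * fz⁻¹
  | 2 => fz

def σf : F3 →* F3 := FreeGroup.lift σmap
def τf : F3 →* F3 := FreeGroup.lift τmap

lemma σf_x : σf fx = (fy * fz)⁻¹ * fx * (fy * fz) := FreeGroup.lift_apply_of
lemma σf_y : σf fy = fz⁻¹ * fy * fz := FreeGroup.lift_apply_of
lemma σf_z : σf fz = fz := FreeGroup.lift_apply_of
lemma τf_x : τf fx = (fz * fy) * fx * (fz * fy)⁻¹ := FreeGroup.lift_apply_of
lemma τf_y : τf fy = fz * fy * fz⁻¹ := FreeGroup.lift_apply_of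
lemma τf_z : τf fz = fz := FreeGroup.lift_apply_of

lemma στ_x : σf (τf fx) = fx := by
  rw [τf_x]; simp only [map_mul, map_inv, σf_x, σf_y, σf_z]; group
lemma στ_y : σf (τf fy) = fy := by
  rw [τf_y]; simp only [map_mul, map_inv, σf_y, σf_z]; group
lemma στ_z : σf (τf fz) = fz := by rw [τf_z, σf_z]
lemma τσ_x : τf (σf fx) = fx := by
  rw [σf_x]; simp only [map_mul, map_inv, τf_x, τf_y, τf_z]; group
lemma τσ_y : τf (σf fy) = fy := by
  rw [σf_y]; simp only [map_mul, map_inv, τf_y, τf_z]; group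
lemma τσ_z : τf (σf fz) = fz := by rw [σf_z, τf_z]

lemma στ : σf.comp τf = MonoidHom.id F3 := by
  apply FreeGroup.ext_hom
  intro a
  fin_cases a
  · exact στ_x
  · exact στ_y
  · exact στ_z

lemma τσ : τf.comp σf = MonoidHom.id F3 := by
  apply FreeGroup.ext_hom
  intro a
  fin_cases a
  · exact τσ_x
  · exact τσ_y
  · exact τσ_z

def σe : F3 ≃* F3 := MonoidHom.toMulEquiv σf τf τσ στ

lemma σe_apply (w : F3) : σe w = σf w := rfl

def φz : Multiplicative ℤ →* MulAut F3 := zpowersHom (MulAut F3) σe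

abbrev Q7 := F3 ⋊[φz] Multiplicative ℤ

def tt : Multiplicative ℤ := Multiplicative.ofAdd 1

lemma φz_tt : φz tt = σe := by
  rw [φz, zpowersHom_apply, tt]
  norm_num

def fQ : Fin 5 → Q7 := fun i =>
  match i with
  | 0 => 1
  | 1 => inl (fx * fy * fz) * inr tt
  | 2 => inl (fy * fz) * inr tt
  | 3 => inl fz * inr tt
  | 4 => inl 1 * inr tt

lemma inr_tt_mul_inl (n : F3) : (inr tt : Q7) * inl n = inl (σf n) * inr tt := by
  have := (inl_aut (φ := φz) tt n).symm
  rw [φz_tt, σe_apply] at this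
  rw [← this, map_inv]
  group

lemma comm_of {a b : F3} (h : a * σf b = b * σf a) :
    Commute (inl a * inr tt : Q7) (inl b * inr tt) := by
  unfold Commute SemiconjBy
  calc inl a * inr tt * (inl b * inr tt)
      = inl a * (inr tt * inl b) * inr tt := by group
    _ = inl (a * σf b) * (inr tt * inr tt) := by rw [inr_tt_mul_inl, map_mul]; group
    _ = inl (b * σf a) * (inr tt * inr tt) := by rw [h]
    _ = inl b * (inr tt * inl a) * inr tt := by rw [inr_tt_mul_inl, map_mul]; group
    _ = inl b * inr tt * (inl a * inr tt) := by group

lemma commQ : ∀ u v : Fin 5, Γ7.Adj u v → Commute (fQ u) (fQ v) := by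
  have c12 : Commute (fQ 1) (fQ 2) := by
    refine comm_of ?_
    simp only [map_mul, σf_y, σf_z, σf_x]
    group
  have c23 : Commute (fQ 2) (fQ 3) := by
    refine comm_of ?_
    simp only [map_mul, σf_y, σf_z]
    group
  have c34 : Commute (fQ 3) (fQ 4) := by
    refine comm_of ?_
    simp only [map_one, σf_z]
    group
  intro u v huv
  fin_cases u <;> fin_cases v <;>
    first
      | exact Commute.one_left _
      | exact Commute.one_right _
      | exact c12
      | exact c12.symm
      | exact c23
      | exact c23.symm
      | exact c34
      | exact c34.symm
      | exact absurd huv (by simp [Γ7, SimpleGraph.fromRel_adj]; try decide)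

lemma relsQ : ∀ r ∈ raagRels Γ7, FreeGroup.lift fQ r = 1 := by
  rintro r ⟨u, v, huv, rfl⟩
  simp only [map_mul, map_inv, FreeGroup.lift_apply_of]
  have hc := commQ u v huv
  rw [hc.eq]
  group

noncomputable def ρ : RAAG Γ7 →* Q7 := PresentedGroup.toGroup relsQ

lemma ρ_ga (i : Fin 5) : ρ (ga i) = fQ i := PresentedGroup.toGroup.of relsQ

lemma mul_inv_gen (a b : F3) :
    (inl a * inr tt : Q7) * (inl b * inr tt)⁻¹ = inl (a * b⁻¹) := by
  have h1 : (inl (a * b⁻¹) : Q7) * (inl b * inr tt) = inl a * inr tt := by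
    rw [← mul_assoc, ← map_mul, inv_mul_cancel_right]
  rw [← h1]
  group

lemma ρ_b : ρ (ga 0) = 1 := ρ_ga 0
lemma ρ_x : ρ gx = inl fx := by
  rw [gx, map_mul, map_inv, ρ_ga, ρ_ga]
  show (inl (fx * fy * fz) * inr tt : Q7) * (inl (fy * fz) * inr tt)⁻¹ = inl fx
  rw [mul_inv_gen]
  congr 1
  group
lemma ρ_y : ρ gy = inl fy := by
  rw [gy, map_mul, map_inv, ρ_ga, ρ_ga]
  show (inl (fy * fz) * inr tt : Q7) * (inl fz * inr tt)⁻¹ = inl fy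
  rw [mul_inv_gen]
  congr 1
  group
lemma ρ_z : ρ gz = inl fz := by
  rw [gz, map_mul, map_inv, ρ_ga, ρ_ga]
  show (inl fz * inr tt : Q7) * (inl 1 * inr tt)⁻¹ = inl fz
  rw [mul_inv_gen]
  congr 1

end Aux7
namespace Aux7
open SemidirectProduct

lemma T0_cases {u : RAAG Γ7} (hu : u ∈ T0) : u = ga 0 ∨ u = gx ∨ u = gy ∨ u = gz := by
  simpa [T0, Set.mem_insert_iff, Set.mem_singleton_iff] using hu

lemma ρ_letter {u : RAAG Γ7} (hu : u ∈ T0 ∨ u⁻¹ ∈ T0) :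
    ∃ w : F3, ρ u = inl w ∧ FreeGroup.norm w ≤ 1 := by
  rcases hu with hu | hu
  · rcases T0_cases hu with rfl | rfl | rfl | rfl
    · exact ⟨1, by rw [ρ_b, map_one], by simp⟩
    · exact ⟨fx, ρ_x, le_of_eq (FreeGroup.norm_of 0)⟩
    · exact ⟨fy, ρ_y, le_of_eq (FreeGroup.norm_of 1)⟩
    · exact ⟨fz, ρ_z, le_of_eq (FreeGroup.norm_of 2)⟩
  · have key : ∀ v : RAAG Γ7, ∀ w : F3, ρ v = inl w → FreeGroup.norm w ≤ 1 →
        u = v⁻¹ → ∃ w : F3, ρ u = inl w ∧ FreeGroup.norm w ≤ 1 := by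
      rintro v w hv hn rfl
      exact ⟨w⁻¹, by rw [map_inv, hv, map_inv], by rw [FreeGroup.norm_inv_eq]; exact hn⟩
    rcases T0_cases hu with h | h | h | h
    · exact key (ga 0) 1 (by rw [ρ_b, map_one]) (by simp) (by rw [← h, inv_inv])
    · exact key gx fx ρ_x (le_of_eq (FreeGroup.norm_of 0)) (by rw [← h, inv_inv])
    · exact key gy fy ρ_y (le_of_eq (FreeGroup.norm_of 1)) (by rw [← h, inv_inv])
    · exact key gz fz ρ_z (le_of_eq (FreeGroup.norm_of 2)) (by rw [← h, inv_inv])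

lemma ρ_word : ∀ {m : List (RAAG Γ7)}, IsWord T0 m →
    ∃ w : F3, ρ m.prod = inl w ∧ FreeGroup.norm w ≤ m.length := by
  intro m
  induction m with
  | nil => exact fun _ => ⟨1, by rw [List.prod_nil, map_one, map_one], by simp⟩
  | cons u t ih =>
    intro hm
    obtain ⟨w1, hw1, hn1⟩ := ρ_letter (hm u (List.mem_cons_self))
    obtain ⟨w2, hw2, hn2⟩ := ih (fun v hv => hm v (List.mem_cons_of_mem u hv))
    refine ⟨w1 * w2, ?_, ?_⟩
    · rw [List.prod_cons, map_mul, hw1, hw2, map_mul]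
    · calc FreeGroup.norm (w1 * w2) ≤ FreeGroup.norm w1 + FreeGroup.norm w2 :=
        FreeGroup.norm_mul_le _ _
      _ ≤ 1 + t.length := Nat.add_le_add hn1 hn2
      _ ≤ (u :: t).length := by simp [List.length_cons]; omega

def hw (n : ℕ) : RAAG Γ7 := (ga 1 * gz) ^ n * ((ga 1) ^ n)⁻¹
def Gb (k : ℕ) : F3 := fx ^ k * fy ^ k * fz * (fy ^ k)⁻¹ * (fx ^ k)⁻¹
def Gn : ℕ → F3
  | 0 => 1
  | n + 1 => Gn n * Gb (n + 1)

lemma conj_pow' {G : Type*} [Group G] (a b : G) (m : ℕ) :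
    (a⁻¹ * b * a) ^ m = a⁻¹ * b ^ m * a := by
  induction m with
  | zero => group
  | succ m ih => rw [pow_succ, pow_succ, ih]; group

lemma σf_PP (m : ℕ) : σf (fx ^ m * fy ^ m * fz ^ m)
    = (fy * fz)⁻¹ * fx ^ m * (fy * fz) * (fz⁻¹ * fy ^ m * fz) * fz ^ m := by
  simp only [map_mul, map_pow, σf_x, σf_y, σf_z]
  rw [conj_pow', conj_pow']

lemma ρ_ga1 : ρ (ga 1) = inl (fx * fy * fz) * inr tt := ρ_ga 1

lemma ρ_a1_pow (m : ℕ) :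
    ρ (ga 1) ^ m = inl (fx ^ m * fy ^ m * fz ^ m) * inr (tt ^ m) := by
  induction m with
  | zero => simp
  | succ m ih =>
    rw [pow_succ', ih, ρ_ga1]
    calc inl (fx * fy * fz) * inr tt * (inl (fx ^ m * fy ^ m * fz ^ m) * inr (tt ^ m))
        = inl (fx * fy * fz) * (inr tt * inl (fx ^ m * fy ^ m * fz ^ m)) * inr (tt ^ m) := by
          group
      _ = inl (fx * fy * fz) * (inl (σf (fx ^ m * fy ^ m * fz ^ m)) * inr tt) * inr (tt ^ m) := by
          rw [inr_tt_mul_inl]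
      _ = inl (fx * fy * fz) * inl (σf (fx ^ m * fy ^ m * fz ^ m)) * inr tt * inr (tt ^ m) := by
          group
      _ = inl (fx * fy * fz * σf (fx ^ m * fy ^ m * fz ^ m)) * (inr tt * inr (tt ^ m)) := by
          rw [← map_mul]; group
      _ = inl (fx ^ (m+1) * fy ^ (m+1) * fz ^ (m+1)) * inr (tt ^ (m+1)) := by
          rw [σf_PP, ← map_mul, ← pow_succ']
          congr 1
          group

lemma σe_pow_fz (m : ℕ) : (σe ^ m) fz = fz := by
  induction m with
  | zero => rfl
  | succ m ih => rw [pow_succ, MulAut.mul_apply, show σe fz = fz from σf_z, ih]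

lemma ρ_conj (m : ℕ) : ρ ((ga 1) ^ m * gz * ((ga 1) ^ m)⁻¹)
    = inl ((fx ^ m * fy ^ m * fz ^ m) * fz * (fx ^ m * fy ^ m * fz ^ m)⁻¹) := by
  rw [map_mul, map_mul, map_inv, map_pow, ρ_a1_pow, ρ_z]
  have h1 : (inr (tt ^ m) : Q7) * inl fz * (inr (tt ^ m))⁻¹ = inl fz := by
    rw [← map_inv, ← inl_aut, map_pow, φz_tt, σe_pow_fz]
  calc inl (fx ^ m * fy ^ m * fz ^ m) * inr (tt ^ m) * inl fz *
        (inl (fx ^ m * fy ^ m * fz ^ m) * inr (tt ^ m))⁻¹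
      = inl (fx ^ m * fy ^ m * fz ^ m) * (inr (tt ^ m) * inl fz * (inr (tt ^ m))⁻¹) *
        (inl (fx ^ m * fy ^ m * fz ^ m))⁻¹ := by group
    _ = inl (fx ^ m * fy ^ m * fz ^ m) * inl fz * (inl (fx ^ m * fy ^ m * fz ^ m))⁻¹ := by
        rw [h1]
    _ = inl ((fx ^ m * fy ^ m * fz ^ m) * fz * (fx ^ m * fy ^ m * fz ^ m)⁻¹) := by
        rw [← map_inv, ← map_mul, ← map_mul]

lemma hw_succ (n : ℕ) : hw (n + 1) = hw n * ((ga 1) ^ (n+1) * gz * ((ga 1) ^ (n+1))⁻¹) := by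
  unfold hw
  rw [pow_succ]
  group

lemma ρ_hw (n : ℕ) : ρ (hw n) = inl (Gn n) := by
  induction n with
  | zero => simp [hw, Gn]
  | succ n ih =>
    rw [hw_succ, map_mul, ih, ρ_conj, ← map_mul]
    congr 1
    show Gn n * _ = Gn n * Gb (n + 1)
    congr 1
    unfold Gb
    group

end Aux7
namespace Aux7
open SemidirectProduct

abbrev L3 := List (Fin 3 × Bool)

def Rnc (a b : Fin 3 × Bool) : Prop := ¬(a.1 = b.1 ∧ a.2 = !b.2)

lemma reduce_chain' : ∀ L : L3, List.Chain' Rnc L → FreeGroup.reduce L = L := by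
  intro L
  induction L with
  | nil => exact fun _ => rfl
  | cons x t ih =>
    intro hc
    rw [FreeGroup.reduce.cons, ih hc.tail]
    cases t with
    | nil => rfl
    | cons hd tl =>
      have hr : Rnc x hd := (List.isChain_cons_cons.1 hc).1
      simp only []
      rw [if_neg hr]

def yf : Fin 3 × Bool := (1, false)
def xt : Fin 3 × Bool := (0, true)
def yt : Fin 3 × Bool := (1, true)
def zt : Fin 3 × Bool := (2, true)
def xf : Fin 3 × Bool := (0, false)

def Bb (j : ℕ) : L3 :=
  (List.replicate j yf ++ [xt] ++ List.replicate (j + 1) yt) ++ [zt]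

def Jl : ℕ → L3
  | 0 => []
  | n + 1 => Jl n ++ Bb n

def Ll (n : ℕ) : L3 := Jl n ++ (List.replicate n yf ++ List.replicate n xf)

lemma len_Bb (j : ℕ) : (Bb j).length = 2 * j + 3 := by
  simp [Bb]; omega

lemma len_Jl (n : ℕ) : (Jl n).length = n * n + 2 * n := by
  induction n with
  | zero => rfl
  | succ n ih =>
    show (Jl n ++ Bb n).length = _
    rw [List.length_append, ih, len_Bb]
    ring

lemma len_Ll (n : ℕ) : (Ll n).length = n * n + 4 * n := by
  rw [Ll, List.length_append, List.length_append, len_Jl,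
    List.length_replicate, List.length_replicate]
  ring

lemma mk_single_t (a : Fin 3) : FreeGroup.mk [(a, true)] = FreeGroup.of a := rfl

lemma mk_single_f (a : Fin 3) : FreeGroup.mk [(a, false)] = (FreeGroup.of a)⁻¹ := by
  have h : FreeGroup.invRev [(a, true)] = [(a, false)] := by
    simp [FreeGroup.invRev]
  rw [← h, ← FreeGroup.inv_mk, mk_single_t]

lemma mk_repl (a : Fin 3) (b : Bool) (n : ℕ) :
    FreeGroup.mk (List.replicate n (a, b)) = (FreeGroup.mk [(a, b)]) ^ n := by
  induction n with
  | zero => rfl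
  | succ n ih =>
    rw [List.replicate_succ, show ((a,b) :: List.replicate n (a,b) : L3)
      = [(a,b)] ++ List.replicate n (a,b) from rfl, ← FreeGroup.mul_mk, ih, pow_succ']

lemma mk_Bb (j : ℕ) :
    FreeGroup.mk (Bb j) = (fy⁻¹) ^ j * fx * fy ^ (j + 1) * fz := by
  rw [Bb, ← FreeGroup.mul_mk, ← FreeGroup.mul_mk, ← FreeGroup.mul_mk, yf, xt, yt, zt,
    mk_repl, mk_repl, mk_single_f, mk_single_t, mk_single_t, mk_single_t]
  rfl

lemma mk_Jl (n : ℕ) : FreeGroup.mk (Jl n) = Gn n * fx ^ n * fy ^ n := by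
  induction n with
  | zero => show (1 : F3) = 1 * 1 * 1; group
  | succ n ih =>
    show FreeGroup.mk (Jl n ++ Bb n) = _
    rw [← FreeGroup.mul_mk, ih, mk_Bb]
    show _ = Gn n * Gb (n + 1) * fx ^ (n + 1) * fy ^ (n + 1)
    rw [Gb]
    group

lemma mk_Ll (n : ℕ) : FreeGroup.mk (Ll n) = Gn n := by
  rw [Ll, ← FreeGroup.mul_mk, ← FreeGroup.mul_mk, mk_Jl, yf, xf, mk_repl, mk_repl,
    mk_single_f, mk_single_f]
  show Gn n * fx ^ n * fy ^ n * ((fy⁻¹) ^ n * (fx⁻¹) ^ n) = Gn n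
  group

lemma Rnc_of_ne {a b : Fin 3 × Bool} (h : a.1 ≠ b.1) : Rnc a b := fun hc => h hc.1

lemma Rnc_same (a : Fin 3 × Bool) : Rnc a a := fun hc => by simp at hc

lemma chain_repl (a : Fin 3 × Bool) (n : ℕ) : List.Chain' Rnc (List.replicate n a) :=
  List.isChain_replicate_of_rel n (Rnc_same a)

lemma chain'_app {l1 l2 : L3} (h1 : List.Chain' Rnc l1) (h2 : List.Chain' Rnc l2)
    (hj : ∀ x y, l1.getLast? = some x → l2.head? = some y → Rnc x y) :
    List.Chain' Rnc (l1 ++ l2) :=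
  List.isChain_append.2 ⟨h1, h2, fun x hx y hy => hj x y hx hy⟩

lemma getLast_repl_succ (a : Fin 3 × Bool) (n : ℕ) :
    (List.replicate (n + 1) a).getLast? = some a := by
  rw [List.replicate_succ', List.getLast?_concat]

lemma head_repl_succ (a : Fin 3 × Bool) (n : ℕ) :
    (List.replicate (n + 1) a).head? = some a := by
  rw [List.replicate_succ]; rfl

lemma chain_Bb (j : ℕ) : List.Chain' Rnc (Bb j) := by
  refine chain'_app (chain'_app (chain'_app (chain_repl yf j) (List.isChain_singleton xt) ?_)
    (chain_repl yt (j + 1)) ?_) (List.isChain_singleton zt) ?_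
  · intro x y hx hy
    cases j with
    | zero => simp at hx
    | succ j =>
      rw [getLast_repl_succ] at hx
      rw [List.head?_cons] at hy
      cases hx; cases hy
      exact Rnc_of_ne (by decide)
  · intro x y hx hy
    rw [List.getLast?_concat] at hx
    rw [head_repl_succ] at hy
    cases hx; cases hy
    exact Rnc_of_ne (by decide)
  · intro x y hx hy
    rw [List.getLast?_append_of_ne_nil _ (by simp)] at hx
    rw [getLast_repl_succ] at hx
    rw [List.head?_cons] at hy
    cases hx; cases hy
    exact Rnc_of_ne (by decide)

lemma getLast_Bb (j : ℕ) : (Bb j).getLast? = some zt := List.getLast?_concat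

lemma head_Bb (j : ℕ) : ∃ y, (Bb j).head? = some y ∧ y.1 ≠ 2 := by
  cases j with
  | zero => exact ⟨xt, rfl, by decide⟩
  | succ j => exact ⟨yf, rfl, by decide⟩

lemma chain_Jl (n : ℕ) :
    List.Chain' Rnc (Jl n) ∧ ((Jl n).getLast? = none ∨ (Jl n).getLast? = some zt) := by
  induction n with
  | zero => exact ⟨List.isChain_nil, Or.inl rfl⟩
  | succ n ih =>
    constructor
    · refine chain'_app ih.1 (chain_Bb n) ?_
      intro x y hx hy
      obtain ⟨y', hy', hy2⟩ := head_Bb n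
      rcases ih.2 with h | h
      · rw [h] at hx; cases hx
      · rw [h] at hx; cases hx
        rw [hy'] at hy; cases hy
        exact fun hc => hy2 (hc.1.symm ▸ rfl)
    · right
      show (Jl n ++ Bb n).getLast? = some zt
      rw [List.getLast?_append_of_ne_nil _ (by simp [Bb]), getLast_Bb]

lemma chain_Ll (n : ℕ) : List.Chain' Rnc (Ll n) := by
  refine chain'_app (chain_Jl n).1 (chain'_app (chain_repl yf n) (chain_repl xf n) ?_) ?_
  · intro x y hx hy
    cases n with
    | zero => simp at hx
    | succ n =>
      rw [getLast_repl_succ] at hx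
      rw [head_repl_succ] at hy
      cases hx; cases hy
      exact Rnc_of_ne (by decide)
  · intro x y hx hy
    rcases (chain_Jl n).2 with h | h
    · rw [h] at hx; cases hx
    · rw [h] at hx; cases hx
      cases n with
      | zero => simp at hy
      | succ n =>
        rw [List.head?_append_of_ne_nil _ (by simp), head_repl_succ] at hy
        cases hy
        exact Rnc_of_ne (by decide)

lemma norm_Gn (n : ℕ) : FreeGroup.norm (Gn n) = n * n + 4 * n := by
  rw [← mk_Ll, FreeGroup.norm, FreeGroup.toWord_mk, reduce_chain' _ (chain_Ll n), len_Ll]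

end Aux7
namespace Aux7
open SemidirectProduct

variable {p : RAAG Γ7 →* Multiplicative ℤ}

section
variable (hp0 : p (raagGen Γ7 0) = 1)
    (hpa : ∀ i : Fin 5, i ≠ 0 → p (raagGen Γ7 i) = Multiplicative.ofAdd 1)
include hp0 hpa

lemma hw_mem_ker (n : ℕ) : hw n ∈ p.ker := by
  have hz : p gz = 1 := T0_subset_ker hp0 hpa memT0_z
  have h1 : p (ga 1) = Multiplicative.ofAdd 1 := by rw [ga]; exact hpa 1 (by decide)
  show p (hw n) = 1
  rw [hw, map_mul, map_inv, map_pow, map_pow, map_mul, h1, hz, mul_one, mul_inv_cancel]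

omit hp0 hpa in
lemma hw_S_word (n : ℕ) :
    ∃ l : List (RAAG Γ7), IsWord (Set.range (raagGen Γ7)) l ∧ l.prod = hw n ∧
      l.length = 4 * n := by
  have part1 : ∀ m : ℕ, ∃ l1 : List (RAAG Γ7), IsWord (Set.range (raagGen Γ7)) l1 ∧
      l1.prod = (ga 1 * gz) ^ m ∧ l1.length = 3 * m := by
    intro m
    induction m with
    | zero => exact ⟨[], fun u hu => absurd hu (List.not_mem_nil), by simp, rfl⟩
    | succ m ih =>
      obtain ⟨l1, hw1, hp1, hl1⟩ := ih
      refine ⟨ga 1 :: ga 3 :: (ga 4)⁻¹ :: l1, ?_, ?_, by simp [hl1]; ring⟩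
      · intro u hu
        simp only [List.mem_cons] at hu
        rcases hu with rfl | rfl | rfl | hu
        · exact Or.inl ⟨1, rfl⟩
        · exact Or.inl ⟨3, rfl⟩
        · exact Or.inr (by rw [inv_inv]; exact ⟨4, rfl⟩)
        · exact hw1 u hu
      · rw [List.prod_cons, List.prod_cons, List.prod_cons, hp1, pow_succ', gz]
        group
  obtain ⟨l1, hw1, hp1, hl1⟩ := part1 n
  refine ⟨l1 ++ List.replicate n (ga 1)⁻¹, ?_, ?_, ?_⟩
  · refine hw1.append ?_
    intro u hu
    rw [List.eq_of_mem_replicate hu]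
    exact Or.inr (by rw [inv_inv]; exact ⟨1, rfl⟩)
  · rw [List.prod_append, hp1, List.prod_replicate, inv_pow, hw]
  · rw [List.length_append, hl1, List.length_replicate]
    omega

lemma lower_T0 (n : ℕ) : n * n ≤ wordLength T0 (hw n) := by
  have hm : hw n ∈ Subgroup.closure T0 := by
    rw [closure_T0 hp0 hpa]; exact hw_mem_ker hp0 hpa n
  obtain ⟨m, hmw, hmp, hml⟩ := exists_word (exists_word_of_mem_closure hm)
  obtain ⟨w, hρ, hnorm⟩ := ρ_word hmw
  rw [hmp, ρ_hw] at hρ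
  have hwG : w = Gn n := inl_injective hρ.symm
  calc n * n ≤ FreeGroup.norm (Gn n) := by rw [norm_Gn]; omega
    _ = FreeGroup.norm w := by rw [hwG]
    _ ≤ m.length := hnorm
    _ = wordLength T0 (hw n) := hml

lemma upper_bound {T : Set (RAAG Γ7)} (hTgen : Subgroup.closure T = p.ker) {K1 : ℕ}
    (hU : ∀ u : RAAG Γ7, (u ∈ T0 ∨ u⁻¹ ∈ T0) →
      ∃ m : List (RAAG Γ7), IsWord T m ∧ m.prod = u ∧ m.length ≤ K1) :
    ∀ r : ℕ, ∀ h ∈ p.ker, wordLength (Set.range (raagGen Γ7)) h ≤ r →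
      wordLength T h ≤ K1 * (r * (4 * r + 5)) := by
  intro r h hker hr
  have hStop : h ∈ Subgroup.closure (Set.range (raagGen Γ7)) := by
    rw [show Set.range (raagGen Γ7) = Set.range (PresentedGroup.of (rels := raagRels Γ7)) from
      rfl, PresentedGroup.closure_range_of]
    trivial
  obtain ⟨l, hlw, hlp, hll⟩ := exists_word (exists_word_of_mem_closure hStop)
  obtain ⟨m, hmw, hmp, hml⟩ := ker_word hp0 hpa hker hlw hlp
  have hT0 : wordLength T0 h ≤ r * (4 * r + 5) := by
    calc wordLength T0 h ≤ m.length := wordLength_le hmw hmp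
      _ ≤ l.length * (4 * l.length + 5) := hml
      _ ≤ r * (4 * r + 5) := Nat.mul_le_mul (hll ▸ hr) (by have := hll ▸ hr; omega)
  have h2 : wordLength T h ≤ K1 * wordLength T0 h := by
    refine wordLength_le_mul hU ?_
    refine exists_word_of_mem_closure ?_
    rw [closure_T0 hp0 hpa]
    exact hker
  calc wordLength T h ≤ K1 * wordLength T0 h := h2
    _ ≤ K1 * (r * (4 * r + 5)) := Nat.mul_le_mul_left _ hT0

end
end Aux7
open Aux7 in
theorem stmt7 (p : RAAG Γ7 →* Multiplicative ℤ)
    (hp0 : p (raagGen Γ7 0) = 1)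
    (hpa : ∀ i : Fin 5, i ≠ 0 → p (raagGen Γ7 i) = Multiplicative.ofAdd 1) :
    Subgroup.FG p.ker ∧
    ∀ T : Set (RAAG Γ7), T.Finite → T ⊆ (p.ker : Set (RAAG Γ7)) →
      Subgroup.closure T = p.ker →
      FEquiv (distortion (Set.range (raagGen Γ7)) T p.ker) (fun n => n ^ 2) := by
  constructor
  · exact ker_fg hp0 hpa
  · intro T hTfin hTsub hTgen
    have hker4 : ∀ u ∈ T0, u ∈ Subgroup.closure T := fun u hu => by
      rw [hTgen]; exact T0_subset_ker hp0 hpa hu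
    obtain ⟨wb, hwwb, hpb⟩ := exists_word_of_mem_closure (hker4 _ memT0_b)
    obtain ⟨wx, hwwx, hpx⟩ := exists_word_of_mem_closure (hker4 _ memT0_x)
    obtain ⟨wy, hwwy, hpy⟩ := exists_word_of_mem_closure (hker4 _ memT0_y)
    obtain ⟨wz, hwwz, hpz⟩ := exists_word_of_mem_closure (hker4 _ memT0_z)
    set K1 := ((wb.length.max wx.length).max wy.length).max wz.length with hK1
    have hb1 : wb.length ≤ K1 :=
      le_trans (le_trans (le_max_left _ _) (le_max_left _ _)) (le_max_left _ _)
    have hx1 : wx.length ≤ K1 :=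
      le_trans (le_trans (le_max_right _ _) (le_max_left _ _)) (le_max_left _ _)
    have hy1 : wy.length ≤ K1 := le_trans (le_max_right _ _) (le_max_left _ _)
    have hz1 : wz.length ≤ K1 := le_max_right _ _
    have hUinv : ∀ (v : RAAG Γ7) (w : List (RAAG Γ7)), IsWord T w → w.prod = v →
        w.length ≤ K1 → ∀ u : RAAG Γ7, u = v⁻¹ →
        ∃ m : List (RAAG Γ7), IsWord T m ∧ m.prod = u ∧ m.length ≤ K1 := by
      rintro v w hww hpv hlen u rfl
      exact ⟨w.reverse.map (fun g => g⁻¹), (inv_word hww).1,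
        by rw [(inv_word hww).2, hpv], by simpa using hlen⟩
    have hU : ∀ u : RAAG Γ7, (u ∈ T0 ∨ u⁻¹ ∈ T0) →
        ∃ m : List (RAAG Γ7), IsWord T m ∧ m.prod = u ∧ m.length ≤ K1 := by
      intro u hu
      rcases hu with hu | hu
      · rcases T0_cases hu with rfl | rfl | rfl | rfl
        · exact ⟨wb, hwwb, hpb, hb1⟩
        · exact ⟨wx, hwwx, hpx, hx1⟩
        · exact ⟨wy, hwwy, hpy, hy1⟩
        · exact ⟨wz, hwwz, hpz, hz1⟩
      · rcases T0_cases hu with h | h | h | h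
        · exact hUinv _ wb hwwb hpb hb1 u (by rw [← h, inv_inv])
        · exact hUinv _ wx hwwx hpx hx1 u (by rw [← h, inv_inv])
        · exact hUinv _ wy hwwy hpy hy1 u (by rw [← h, inv_inv])
        · exact hUinv _ wz hwwz hpz hz1 u (by rw [← h, inv_inv])
    have hupper := upper_bound hp0 hpa hTgen hU
    set K2 := hTfin.toFinset.sup (fun t => wordLength T0 t) with hK2
    have hkey : ∀ v ∈ T, ∃ m : List (RAAG Γ7), IsWord T0 m ∧ m.prod = v ∧ m.length ≤ K2 := by
      intro v hv
      have hvc : v ∈ Subgroup.closure T0 := by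
        rw [closure_T0 hp0 hpa, ← hTgen]
        exact Subgroup.subset_closure hv
      obtain ⟨m, hm, hmp, hml⟩ := exists_word (exists_word_of_mem_closure hvc)
      refine ⟨m, hm, hmp, ?_⟩
      rw [hml]
      exact Finset.le_sup (hTfin.mem_toFinset.2 hv)
    have hU2 : ∀ u : RAAG Γ7, (u ∈ T ∨ u⁻¹ ∈ T) →
        ∃ m : List (RAAG Γ7), IsWord T0 m ∧ m.prod = u ∧ m.length ≤ K2 := by
      intro u hu
      rcases hu with hu | hu
      · exact hkey u hu
      · obtain ⟨m, hm, hmp, hml⟩ := hkey u⁻¹ hu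
        exact ⟨m.reverse.map (fun g => g⁻¹), (inv_word hm).1,
          by rw [(inv_word hm).2, hmp, inv_inv], by simpa using hml⟩
    constructor
    · refine ⟨5 * K1 + 1, 1, 5 * K1 + 1, 0, by omega, by omega, by omega, ?_⟩
      intro x _
      have hd : distortion (Set.range (raagGen Γ7)) T p.ker x ≤ K1 * (x * (4 * x + 5)) :=
        distortion_le (fun h hh hs => hupper x h hh hs)
      have he : K1 * (x * (4 * x + 5)) = 4 * K1 * (x * x) + 5 * K1 * x := by ring
      have hg : (fun n => n ^ 2) (1 * x) = x * x := by ring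
      rw [hg]
      calc distortion (Set.range (raagGen Γ7)) T p.ker x ≤ K1 * (x * (4 * x + 5)) := hd
        _ = 4 * K1 * (x * x) + 5 * K1 * x := he
        _ ≤ (5 * K1 + 1) * (x * x) + (5 * K1 + 1) * x :=
          Nat.add_le_add (Nat.mul_le_mul_right _ (by omega)) (Nat.mul_le_mul_right _ (by omega))
    · refine ⟨K2 + 1, 4, 1, 0, by omega, by omega, by omega, ?_⟩
      intro x _
      have h1 : x * x ≤ wordLength T0 (hw x) := lower_T0 hp0 hpa x
      have h2 : wordLength T0 (hw x) ≤ K2 * wordLength T (hw x) := by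
        refine wordLength_le_mul hU2 (exists_word_of_mem_closure ?_)
        rw [hTgen]
        exact hw_mem_ker hp0 hpa x
      obtain ⟨l, hlw, hlp, hll⟩ := hw_S_word x
      have hS : wordLength (Set.range (raagGen Γ7)) (hw x) ≤ 4 * x := by
        rw [← hll]; exact wordLength_le hlw hlp
      have h3 : wordLength T (hw x) ≤ distortion (Set.range (raagGen Γ7)) T p.ker (4 * x) :=
        le_distortion (fun h hh hs => hupper (4 * x) h hh hs) (hw_mem_ker hp0 hpa x) hS
      calc x ^ 2 = x * x := sq x
        _ ≤ K2 * wordLength T (hw x) := le_trans h1 h2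
        _ ≤ K2 * distortion (Set.range (raagGen Γ7)) T p.ker (4 * x) :=
          Nat.mul_le_mul_left _ h3
        _ ≤ (K2 + 1) * distortion (Set.range (raagGen Γ7)) T p.ker (4 * x) + 1 * x := by
          have := Nat.mul_le_mul_right (distortion (Set.range (raagGen Γ7)) T p.ker (4 * x))
            (show K2 ≤ K2 + 1 by omega)
          omega
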